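/- Let R be a commutative ring, A a commutative R-algebra, e ∈ A an element that is not a zero divisor, and n = 2l+1 an odd positive integer. Let S = A/(eⁿ), let L be the image in S of the ideal (e^l) ⊆ A and L' the image of (e^{l+1}). Suppose q : S → Hom_R(S, R) is an S-linear bijection (where Hom_R(S, R) is an S-module via (s·φ)(t) = φ(s·t)) such that the pairing ⟨a, b⟩ = q(a)(b) is symmetric. Then: (i) L' ⊆ L and the orthogonal complement of L' equals L; (ii) the pairing on the quotient L/L' given by ⟨x̄, ȳ⟩ = q(x)(y) is well defined, symmetric, and the induced map L/L' → Hom_R(L/L', R) is bijective; (iii) L/L' is isomorphic as an A-module to A/(e), via the map A/(e) → L/L' induced by a ↦ e^l·a. -/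

import Mathlib

set_option maxHeartbeats 1000000


/-- Odd case of Lemma `lm_SqMet`: for `S = A⧸(e^(2l+1))` with `e` a non-zero-divisor and a
symmetric `S`-linear duality `q : S ≃ Hom_R(S,R)` (encoded by its pairing), with `L`, `L'`
the images in `S` of the ideals `(e^l)`, `(e^(l+1))`:
(i) `L' ⊆ L` and `L'^⊥ = L`;
(ii) `q` descends to a well-defined symmetric duality on `L ⧸ L'`;
(iii) `L ⧸ L' ≅ A⧸(e)` as `A`-modules via `a ↦ e^l·a`. -/
theorem stmt_9 (R A : Type*) [CommRing R] [CommRing A] [Algebra R A]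
    (e : A) (he : e ∈ nonZeroDivisors A) (l : ℕ)
    (q : (A ⧸ Ideal.span {e ^ (2 * l + 1)}) →ₗ[R] (A ⧸ Ideal.span {e ^ (2 * l + 1)}) →ₗ[R] R)
    (hlin : ∀ s a b, q (s * a) b = q a (s * b))
    (hsymm : ∀ a b, q a b = q b a)
    (hbij : Function.Bijective ⇑q) :
    let S := A ⧸ Ideal.span {e ^ (2 * l + 1)}
    let mk := Ideal.Quotient.mk (Ideal.span {e ^ (2 * l + 1)})
    let L : Ideal S := Ideal.map mk (Ideal.span {e ^ l})
    let L' : Ideal S := Ideal.map mk (Ideal.span {e ^ (l + 1)})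
    -- (i)
    (L' ≤ L ∧ {a : S | ∀ b ∈ L', q a b = 0} = ↑L) ∧
    -- (ii)
    (∃ qbar : (↥L ⧸ Submodule.comap L.subtype L') →ₗ[R]
        (↥L ⧸ Submodule.comap L.subtype L') →ₗ[R] R,
      (∀ x y : ↥L, qbar (Submodule.Quotient.mk x) (Submodule.Quotient.mk y) = q ↑x ↑y) ∧
      (∀ u v, qbar u v = qbar v u) ∧
      Function.Bijective ⇑qbar) ∧
    -- (iii)
    (∃ g : (A ⧸ Ideal.span {e}) →ₗ[A] (↥L ⧸ Submodule.comap L.subtype L'),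
      (∀ a : A, g (Ideal.Quotient.mk (Ideal.span {e}) a) =
        Submodule.Quotient.mk
          ⟨mk (e ^ l * a),
            Ideal.mem_map_of_mem mk (Ideal.mem_span_singleton'.mpr ⟨a, mul_comm a (e ^ l)⟩)⟩) ∧
      Function.Bijective ⇑g) := by
  intro S mk L L'
  have hmksurj : Function.Surjective mk := Ideal.Quotient.mk_surjective
  have hLspan : ∀ j : ℕ, Ideal.map mk (Ideal.span {e ^ j}) = Ideal.span {mk (e ^ j)} := by
    intro j; rw [Ideal.map_span, Set.image_singleton]
  have hcancel : ∀ (j : ℕ) (x y : A), e ^ j * x = e ^ j * y → x = y := fun j x y h =>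
    (mul_cancel_left_mem_nonZeroDivisors (pow_mem he j)).mp h
  have hker : ∀ (j k : ℕ), j + k = 2*l+1 → ∀ x : A, mk (e ^ j * x) = 0 → ∃ c, x = e ^ k * c := by
    intro j k hjk x hx
    rw [Ideal.Quotient.eq_zero_iff_mem, Ideal.mem_span_singleton'] at hx
    obtain ⟨c, hc⟩ := hx
    refine ⟨c, hcancel j _ _ ?_⟩
    rw [← hc, ← hjk, pow_add]; ring
  have horth : ∀ (j k : ℕ), j + k = 2*l+1 →
      {a : S | ∀ b ∈ Ideal.map mk (Ideal.span {e ^ j}), q a b = 0}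
        = ↑(Ideal.map mk (Ideal.span {e ^ k})) := by
    intro j k hjk
    ext a
    simp only [Set.mem_setOf_eq, SetLike.mem_coe, hLspan]
    constructor
    · intro ha
      obtain ⟨x, rfl⟩ := hmksurj a
      have h0 : q (mk (e ^ j) * mk x) = 0 := by
        apply LinearMap.ext; intro s
        rw [hlin, LinearMap.zero_apply]
        exact ha _ (Ideal.mem_span_singleton'.mpr ⟨s, mul_comm _ _⟩)
      have h1 : mk (e ^ j) * mk x = 0 := hbij.injective (by rw [h0, map_zero])
      rw [← map_mul] at h1
      obtain ⟨c, hc⟩ := hker j k hjk x h1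
      exact Ideal.mem_span_singleton'.mpr ⟨mk c, by rw [hc, map_mul, mul_comm]⟩
    · intro ha b hb
      obtain ⟨s, rfl⟩ := Ideal.mem_span_singleton'.mp ha
      obtain ⟨t, rfl⟩ := Ideal.mem_span_singleton'.mp hb
      have hz : mk (e ^ j) * mk (e ^ k) = 0 := by
        rw [← map_mul, ← pow_add, Ideal.Quotient.eq_zero_iff_mem]
        exact Ideal.mem_span_singleton'.mpr
          ⟨e ^ (j + k - (2*l+1)), by rw [← pow_add]; congr 1; omega⟩
      calc q (s * mk (e ^ k)) (t * mk (e ^ j))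
          = q (mk (e ^ k)) (s * (t * mk (e ^ j))) := hlin s _ _
        _ = q (mk (e ^ k)) (mk (e ^ j) * (s * t)) := by
            congr 1; rw [mul_comm (mk (e ^ j)) (s * t), mul_assoc]
        _ = q (mk (e ^ j) * mk (e ^ k)) (s * t) := (hlin _ _ _).symm
        _ = 0 := by rw [hz, map_zero, LinearMap.zero_apply]
  -- membership characterizations for the let-bound ideals
  have hLmem : ∀ z : S, z ∈ L ↔ ∃ c : S, c * mk (e ^ l) = z := by
    intro z
    show z ∈ Ideal.map mk (Ideal.span {e ^ l}) ↔ _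
    rw [hLspan]
    exact Ideal.mem_span_singleton'
  have hL'mem : ∀ z : S, z ∈ L' ↔ ∃ c : S, c * mk (e ^ (l+1)) = z := by
    intro z
    show z ∈ Ideal.map mk (Ideal.span {e ^ (l+1)}) ↔ _
    rw [hLspan]
    exact Ideal.mem_span_singleton'
  -- part (i)
  have hi1 : L' ≤ L := by
    apply Ideal.map_mono
    rw [Ideal.span_le, Set.singleton_subset_iff]
    exact Ideal.mem_span_singleton'.mpr ⟨e, by rw [pow_succ]; ring⟩
  have hi2 : {a : S | ∀ b ∈ L', q a b = 0} = ↑L := horth (l+1) l (by omega)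
  have hmemL : ∀ s : S, s * mk (e ^ l) ∈ L := fun s => (hLmem _).mpr ⟨s, rfl⟩
  have hkill : ∀ x y : S, x ∈ L → y ∈ L' → q x y = 0 := by
    intro x y hx hy
    have hx' : x ∈ {a : S | ∀ b ∈ L', q a b = 0} := by
      rw [hi2]; exact hx
    exact hx' y hy
  -- part (ii)
  set p : Submodule S ↥L := Submodule.comap L.subtype L' with hp
  have hmemp : ∀ x : ↥L, x ∈ p ↔ (x : S) ∈ L' := fun x => Iff.rfl
  set inc : ↥L →ₗ[R] S := L.subtype.restrictScalars R with hinc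
  set B : ↥L →ₗ[R] ↥L →ₗ[R] R := (q.comp inc).compl₂ inc with hB
  have hBright : ∀ x : ↥L, p.restrictScalars R ≤ LinearMap.ker (B x) := by
    intro x y hy
    exact hkill ↑x ↑y x.2 hy
  set inner : ↥L → ((↥L ⧸ p) →ₗ[R] R) :=
    fun x => Submodule.liftQ (p.restrictScalars R) (B x) (hBright x) with hinner
  set C : ↥L →ₗ[R] ((↥L ⧸ p) →ₗ[R] R) :=
    { toFun := inner
      map_add' := by
        intro x x'
        apply LinearMap.ext; intro u
        obtain ⟨y, rfl⟩ := Submodule.Quotient.mk_surjective _ u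
        show q ↑(x + x') ↑y = q ↑x ↑y + q ↑x' ↑y
        rw [Submodule.coe_add, map_add, LinearMap.add_apply]
      map_smul' := by
        intro r x
        apply LinearMap.ext; intro u
        obtain ⟨y, rfl⟩ := Submodule.Quotient.mk_surjective _ u
        show q ↑(r • x) ↑y = r • q ↑x ↑y
        have hcoe : ((r • x : ↥L) : S) = r • (x : S) := rfl
        rw [hcoe, map_smul, LinearMap.smul_apply] } with hC
  have hCker : p.restrictScalars R ≤ LinearMap.ker C := by
    intro x hx
    rw [LinearMap.mem_ker]
    apply LinearMap.ext; intro u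
    obtain ⟨y, rfl⟩ := Submodule.Quotient.mk_surjective _ u
    show q ↑x ↑y = 0
    rw [hsymm]
    exact hkill ↑y ↑x y.2 hx
  set qbar : (↥L ⧸ p) →ₗ[R] (↥L ⧸ p) →ₗ[R] R :=
    Submodule.liftQ (p.restrictScalars R) C hCker with hqbar
  have hqq : ∀ x y : ↥L, qbar (Submodule.Quotient.mk x) (Submodule.Quotient.mk y) = q ↑x ↑y :=
    fun x y => rfl
  have hqsymm : ∀ u v, qbar u v = qbar v u := by
    intro u v
    obtain ⟨x, rfl⟩ := Submodule.Quotient.mk_surjective _ u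
    obtain ⟨y, rfl⟩ := Submodule.Quotient.mk_surjective _ v
    rw [hqq, hqq, hsymm]
  have hqinj : Function.Injective ⇑qbar := by
    intro u v huv
    obtain ⟨x, rfl⟩ := Submodule.Quotient.mk_surjective _ u
    obtain ⟨y, rfl⟩ := Submodule.Quotient.mk_surjective _ v
    rw [← sub_eq_zero, ← Submodule.Quotient.mk_sub, Submodule.Quotient.mk_eq_zero]
    have hz : ∀ w : ↥L, q ↑(x - y) ↑w = 0 := by
      intro w
      have h1 : qbar (Submodule.Quotient.mk (x - y)) (Submodule.Quotient.mk w) = 0 := by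
        rw [Submodule.Quotient.mk_sub, map_sub, LinearMap.sub_apply, huv, sub_self]
      rwa [hqq] at h1
    have h2 : (↑(x - y) : S) ∈ {a : S | ∀ b ∈ Ideal.map mk (Ideal.span {e ^ l}), q a b = 0} :=
      fun b hb => hz ⟨b, hb⟩
    rw [horth l (l+1) (by omega)] at h2
    exact (hmemp _).mpr h2
  have hqsurj : Function.Surjective ⇑qbar := by
    intro φ
    set μ : S →ₗ[R] ↥L :=
      { toFun := fun s => ⟨s * mk (e ^ l), hmemL s⟩
        map_add' := by intro s t; apply Subtype.ext; simp [add_mul]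
        map_smul' := by intro r s; apply Subtype.ext; simp [smul_mul_assoc] } with hμ
    set ψ : ↥L →ₗ[R] R := φ.comp ((p.restrictScalars R).mkQ) with hψ
    obtain ⟨t, ht⟩ := hbij.surjective (ψ.comp μ)
    have htval : ∀ s : S, q t s = φ (Submodule.Quotient.mk (μ s)) := by
      intro s; rw [ht]; rfl
    have htorth : t ∈ {a : S | ∀ b ∈ Ideal.map mk (Ideal.span {e ^ 1}), q a b = 0} := by
      intro b hb
      rw [hLspan] at hb
      obtain ⟨s, rfl⟩ := Ideal.mem_span_singleton'.mp hb
      rw [htval]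
      have hmem' : μ (s * mk (e ^ 1)) ∈ p := by
        refine (hmemp _).mpr ?_
        show s * mk (e ^ 1) * mk (e ^ l) ∈ L'
        refine (hL'mem _).mpr ⟨s, ?_⟩
        rw [mul_assoc, ← map_mul, ← pow_add]
        congr 3
        omega
      rw [(Submodule.Quotient.mk_eq_zero _).mpr hmem', map_zero]
    rw [horth 1 (2*l) (by omega), SetLike.mem_coe, hLspan] at htorth
    obtain ⟨s, hs⟩ := Ideal.mem_span_singleton'.mp htorth
    refine ⟨Submodule.Quotient.mk ⟨s * mk (e ^ l), hmemL s⟩, ?_⟩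
    apply LinearMap.ext; intro u
    obtain ⟨y, rfl⟩ := Submodule.Quotient.mk_surjective _ u
    rw [hqq]
    obtain ⟨c, hc⟩ := (hLmem ↑y).mp y.2
    have hyeq : y = μ c := by
      apply Subtype.ext
      show (y : S) = c * mk (e ^ l)
      rw [hc]
    have hpow : e ^ (2*l) = e ^ l * e ^ l := by
      rw [← pow_add]; congr 1; omega
    have hkey : (mk (e ^ l) : S) * (s * mk (e ^ l)) = s * mk (e ^ (2*l)) := by
      rw [hpow, map_mul]; ring
    calc q (↑(⟨s * mk (e ^ l), hmemL s⟩ : ↥L)) ↑y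
        = q (s * mk (e ^ l)) (c * mk (e ^ l)) := by rw [← hc]
      _ = q (mk (e ^ l) * (s * mk (e ^ l))) c := by
          rw [mul_comm c (mk (e ^ l)), ← hlin]
      _ = q t c := by rw [hkey, hs]
      _ = φ (Submodule.Quotient.mk (μ c)) := htval c
      _ = φ (Submodule.Quotient.mk y) := by rw [hyeq]
  -- part (iii)
  have hv : mk (e ^ l) ∈ L := (hLmem _).mpr ⟨1, one_mul _⟩
  set v : ↥L ⧸ p := Submodule.Quotient.mk ⟨mk (e ^ l), hv⟩ with hvdef
  set f : A →ₗ[A] (↥L ⧸ p) := LinearMap.toSpanSingleton A _ v with hf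
  have hfapp : ∀ a : A, f a = Submodule.Quotient.mk
      (⟨mk (e ^ l * a), Ideal.mem_map_of_mem mk
        (Ideal.mem_span_singleton'.mpr ⟨a, mul_comm a (e ^ l)⟩)⟩ : ↥L) := by
    intro a
    show a • v = _
    rw [hvdef, ← Submodule.Quotient.mk_smul]
    refine congrArg _ (Subtype.ext ?_)
    show a • (mk (e ^ l) : S) = mk (e ^ l * a)
    rw [Algebra.smul_def, Ideal.Quotient.algebraMap_eq, ← map_mul]
    exact congrArg (⇑mk) (mul_comm a (e ^ l))
  have hfker : Ideal.span {e} ≤ LinearMap.ker f := by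
    rw [Ideal.span_le, Set.singleton_subset_iff, SetLike.mem_coe, LinearMap.mem_ker]
    rw [hfapp, Submodule.Quotient.mk_eq_zero]
    refine (hmemp _).mpr ?_
    show (mk (e ^ l * e) : S) ∈ L'
    exact (hL'mem _).mpr ⟨1, by rw [one_mul]; exact congrArg (⇑mk) (pow_succ e l)⟩
  set g : (A ⧸ Ideal.span {e}) →ₗ[A] (↥L ⧸ p) :=
    Submodule.liftQ (Ideal.span {e}) f hfker with hg
  have hgapp : ∀ a : A, g (Ideal.Quotient.mk (Ideal.span {e}) a) = f a := fun a => rfl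
  have hginj : Function.Injective ⇑g := by
    intro u w huw
    obtain ⟨a, rfl⟩ := Ideal.Quotient.mk_surjective u
    obtain ⟨b, rfl⟩ := Ideal.Quotient.mk_surjective w
    rw [Ideal.Quotient.eq, Ideal.mem_span_singleton']
    have hfab : f a = f b := huw
    have h0 : f (a - b) = 0 := by rw [map_sub, hfab, sub_self]
    rw [hfapp, Submodule.Quotient.mk_eq_zero] at h0
    have h1 : (mk (e ^ l * (a - b)) : S) ∈ L' := (hmemp _).mp h0
    obtain ⟨s, hs⟩ := (hL'mem _).mp h1
    obtain ⟨y, rfl⟩ := hmksurj s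
    have h2 : mk (e ^ l * ((a - b) - e * y)) = 0 := by
      have hrw : e ^ l * ((a - b) - e * y) = e ^ l * (a - b) - y * e ^ (l+1) := by ring
      have h3 : mk (y * e ^ (l+1)) = mk (e ^ l * (a - b)) := by rw [map_mul]; exact hs
      rw [hrw, map_sub, h3, sub_self]
    obtain ⟨c, hc⟩ := hker l (l+1) (by omega) _ h2
    exact ⟨y + c * e ^ l, by linear_combination -hc⟩
  have hgsurj : Function.Surjective ⇑g := by
    intro u
    obtain ⟨y, rfl⟩ := Submodule.Quotient.mk_surjective _ u
    obtain ⟨s, hs⟩ := (hLmem ↑y).mp y.2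
    obtain ⟨a, rfl⟩ := hmksurj s
    refine ⟨Ideal.Quotient.mk _ a, ?_⟩
    rw [hgapp, hfapp]
    refine congrArg _ (Subtype.ext ?_)
    show (mk (e ^ l * a) : S) = ↑y
    rw [mul_comm (e ^ l) a, map_mul]
    exact hs
  exact ⟨⟨hi1, hi2⟩, ⟨qbar, hqq, hqsymm, hqinj, hqsurj⟩, ⟨g, fun a => hfapp a, hginj, hgsurj⟩⟩
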